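/- For every permutation σ of [n], inv(σ) = 2·nes(σ) + crs(σ) + exc(σ), where inv is the number of inversions, exc the number of excedances, crs the number of crossings, and nes the number of nestings. -/

import Mathlib

open Finset Polynomial Equiv

attribute [local instance] Classical.propDecidable

def isCrossing {n : ℕ} (σ : Equiv.Perm (Fin n)) (i j : Fin n) : Prop :=
  (i < j ∧ j < σ i ∧ σ i < σ j) ∨ (σ i < σ j ∧ σ j ≤ i ∧ i < j)

noncomputable def crs {n : ℕ} (σ : Equiv.Perm (Fin n)) : ℕ :=
  (Finset.univ.filter (fun p : Fin n × Fin n => isCrossing σ p.1 p.2)).card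

def avoids123 {n : ℕ} (σ : Equiv.Perm (Fin n)) : Prop :=
  ¬ ∃ i j k : Fin n, i < j ∧ j < k ∧ σ i < σ j ∧ σ j < σ k

def avoids132 {n : ℕ} (σ : Equiv.Perm (Fin n)) : Prop :=
  ¬ ∃ i j k : Fin n, i < j ∧ j < k ∧ σ i < σ k ∧ σ k < σ j

def avoids213 {n : ℕ} (σ : Equiv.Perm (Fin n)) : Prop :=
  ¬ ∃ i j k : Fin n, i < j ∧ j < k ∧ σ j < σ i ∧ σ i < σ k

def avoids231 {n : ℕ} (σ : Equiv.Perm (Fin n)) : Prop :=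
  ¬ ∃ i j k : Fin n, i < j ∧ j < k ∧ σ k < σ i ∧ σ i < σ j

def avoids312 {n : ℕ} (σ : Equiv.Perm (Fin n)) : Prop :=
  ¬ ∃ i j k : Fin n, i < j ∧ j < k ∧ σ j < σ k ∧ σ k < σ i

def avoids321 {n : ℕ} (σ : Equiv.Perm (Fin n)) : Prop :=
  ¬ ∃ i j k : Fin n, i < j ∧ j < k ∧ σ k < σ j ∧ σ j < σ i

noncomputable def ut {n : ℕ} (σ : Equiv.Perm (Fin n)) : ℕ :=
  (Finset.univ.filter (fun i : Fin n => σ⁻¹ i < i ∧ i < σ i)).card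

noncomputable def lt' {n : ℕ} (σ : Equiv.Perm (Fin n)) : ℕ :=
  (Finset.univ.filter (fun i : Fin n => σ i < i ∧ i < σ⁻¹ i)).card

noncomputable def inv' {n : ℕ} (σ : Equiv.Perm (Fin n)) : ℕ :=
  (Finset.univ.filter (fun p : Fin n × Fin n => p.1 < p.2 ∧ σ p.2 < σ p.1)).card

noncomputable def exc {n : ℕ} (σ : Equiv.Perm (Fin n)) : ℕ :=
  (Finset.univ.filter (fun i : Fin n => i < σ i)).card

def isNesting {n : ℕ} (σ : Equiv.Perm (Fin n)) (i j : Fin n) : Prop :=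
  (i < j ∧ j < σ j ∧ σ j < σ i) ∨ (σ j < σ i ∧ σ i ≤ i ∧ i < j)

noncomputable def nes {n : ℕ} (σ : Equiv.Perm (Fin n)) : ℕ :=
  (Finset.univ.filter (fun p : Fin n × Fin n => isNesting σ p.1 p.2)).card

theorem Equiv.Perm.apply_inv_self {α : Type*} (f : Equiv.Perm α) (x : α) : f (f⁻¹ x) = x :=
  f.apply_symm_apply x

theorem Equiv.Perm.inv_apply_self {α : Type*} (f : Equiv.Perm α) (x : α) : f⁻¹ (f x) = x :=
  f.symm_apply_apply x

/-! ### Generic counting helpers -/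

/-- Cardinality of the set of elements satisfying `P`, with a uniform
(classical) decidability instance. -/
noncomputable def fcard {α : Type*} [Fintype α] (P : α → Prop) : ℕ :=
  (Finset.univ.filter P).card

private lemma fcard_eq {α : Type*} [Fintype α] (P : α → Prop) [DecidablePred P] :
    (Finset.univ.filter P).card = fcard P := by
  unfold fcard
  congr 1
  ext a
  simp only [Finset.mem_filter]

private lemma card_split {α : Type*} [Fintype α] {P Q R : α → Prop}
    (h : ∀ a, P a ↔ Q a ∨ R a) (hd : ∀ a, Q a → R a → False) :
    fcard P = fcard Q + fcard R := by
  unfold fcard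
  have hu : Finset.univ.filter P = Finset.univ.filter Q ∪ Finset.univ.filter R := by
    ext a
    simp only [mem_filter, mem_union, mem_univ, true_and]
    exact h a
  rw [hu, card_union_of_disjoint]
  rw [Finset.disjoint_left]
  intro a ha hb
  simp only [mem_filter, mem_univ, true_and] at ha hb
  exact hd a ha hb

private lemma card_split3 {α : Type*} [Fintype α] {P Q R S : α → Prop}
    (h : ∀ a, P a ↔ Q a ∨ R a ∨ S a) (hQR : ∀ a, Q a → R a → False)
    (hQS : ∀ a, Q a → S a → False) (hRS : ∀ a, R a → S a → False) :
    fcard P = fcard Q + (fcard R + fcard S) := by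
  have h1 : fcard P = fcard Q + fcard (fun a => R a ∨ S a) :=
    card_split h (fun a hq hr => hr.elim (hQR a hq) (hQS a hq))
  have h2 : fcard (fun a => R a ∨ S a) = fcard R + fcard S :=
    card_split (fun a => Iff.rfl) hRS
  omega

private lemma card_iff {α : Type*} [Fintype α] {P Q : α → Prop} (h : ∀ a, P a ↔ Q a) :
    fcard P = fcard Q := by
  unfold fcard
  have : Finset.univ.filter P = Finset.univ.filter Q := by
    ext a
    simp only [mem_filter, mem_univ, true_and]
    exact h a
  rw [this]

private lemma card_zero {α : Type*} [Fintype α] {P : α → Prop}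
    (h : ∀ a, ¬ P a) : fcard P = 0 := by
  unfold fcard
  rw [Finset.card_eq_zero, Finset.filter_eq_empty_iff]
  exact fun a _ => h a

private lemma card_bij_pred {α β : Type*} [Fintype α] [Fintype β]
    {P : α → Prop} {Q : β → Prop}
    (f : α → β) (g : β → α) (hf : ∀ a, P a → Q (f a)) (hg : ∀ b, Q b → P (g b))
    (hgf : ∀ a, P a → g (f a) = a) (hfg : ∀ b, Q b → f (g b) = b) :
    fcard P = fcard Q := by
  unfold fcard
  apply Finset.card_nbij' f g
  · intro a ha
    simp only [Finset.mem_coe, mem_filter, mem_univ, true_and] at *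
    exact hf a ha
  · intro b hb
    simp only [Finset.mem_coe, mem_filter, mem_univ, true_and] at *
    exact hg b hb
  · intro a ha
    simp only [Finset.mem_coe, mem_filter, mem_univ, true_and] at ha
    exact hgf a ha
  · intro b hb
    simp only [Finset.mem_coe, mem_filter, mem_univ, true_and] at hb
    exact hfg b hb

/-! ### Pointwise permutation facts -/

private lemma invfix_val {n : ℕ} (σ : Equiv.Perm (Fin n)) (x : Fin n) :
    ((σ⁻¹ x : Fin n) : ℕ) = (x : ℕ) ↔ ((σ x : Fin n) : ℕ) = (x : ℕ) := by
  constructor <;> intro h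
  · have h1 : σ⁻¹ x = x := Fin.ext h
    have h2 := congrArg σ h1
    rw [Equiv.Perm.apply_inv_self] at h2
    exact congrArg Fin.val h2.symm
  · have h1 : σ x = x := Fin.ext h
    have h2 : σ⁻¹ (σ x) = σ⁻¹ x := by rw [h1]
    rw [Equiv.Perm.inv_apply_self] at h2
    exact congrArg Fin.val h2.symm

private lemma inj_val {n : ℕ} (σ : Equiv.Perm (Fin n)) (a b : Fin n) :
    ((σ a : Fin n) : ℕ) = ((σ b : Fin n) : ℕ) ↔ (a : ℕ) = (b : ℕ) := by
  constructor <;> intro h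
  · exact congrArg Fin.val (σ.injective (Fin.ext h))
  · exact congrArg Fin.val (congrArg σ (Fin.ext h))

/-! ### Generic lemmas about covering counts -/

section Cover

variable {n : ℕ} (σ : Equiv.Perm (Fin n)) (P : Fin n → Prop)

/-- X-form equals Z'-form: reparametrize covering pairs through σ. -/
private lemma aX_eq_aZ :
    fcard (fun p : Fin n × Fin n => p.1 < p.2 ∧ p.2 < σ p.1 ∧ P p.2)
      = fcard (fun p : Fin n × Fin n => σ⁻¹ p.2 < p.1 ∧ p.1 < p.2 ∧ P p.1) := by
  apply card_bij_pred (fun p => (p.2, σ p.1)) (fun p => (σ⁻¹ p.2, p.1))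
  · rintro ⟨i, k⟩ ⟨h1, h2, h3⟩
    refine ⟨?_, h2, h3⟩
    simpa [Equiv.Perm.inv_apply_self] using h1
  · rintro ⟨i, m⟩ ⟨h1, h2, h3⟩
    refine ⟨h1, ?_, h3⟩
    simpa [Equiv.Perm.apply_inv_self] using h2
  · rintro ⟨i, k⟩ _
    simp [Equiv.Perm.inv_apply_self]
  · rintro ⟨i, m⟩ _
    simp [Equiv.Perm.apply_inv_self]

private lemma mid_eq :
    fcard (fun p : Fin n × Fin n => σ p.2 = p.1 ∧ p.1 < p.2 ∧ P p.1)
      = fcard (fun i : Fin n => i < σ⁻¹ i ∧ P i) := by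
  apply card_bij_pred (fun p => p.1) (fun i => (i, σ⁻¹ i))
  · rintro ⟨i, k⟩ ⟨h1, h2, h3⟩
    dsimp only at h1 h2 h3 ⊢
    have hk : σ⁻¹ i = k := by rw [← h1, Equiv.Perm.inv_apply_self]
    exact ⟨by rw [hk]; exact h2, h3⟩
  · rintro i ⟨h1, h2⟩
    exact ⟨Equiv.Perm.apply_inv_self σ i, h1, h2⟩
  · rintro ⟨i, k⟩ ⟨h1, h2, h3⟩
    dsimp only at h1 h2 h3 ⊢
    have hk : σ⁻¹ i = k := by rw [← h1, Equiv.Perm.inv_apply_self]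
    simp [hk]
  · rintro i _
    rfl

private lemma rest_eq :
    fcard (fun p : Fin n × Fin n => p.1 < σ p.2 ∧ p.1 < p.2 ∧ P p.1)
      = fcard (fun p : Fin n × Fin n => p.1 < σ⁻¹ p.2 ∧ p.1 < p.2 ∧ P p.1) := by
  apply card_bij_pred (fun p => (p.1, σ p.2)) (fun p => (p.1, σ⁻¹ p.2))
  · rintro ⟨i, m⟩ ⟨h1, h2, h3⟩
    exact ⟨by simpa [Equiv.Perm.inv_apply_self] using h2, h1, h3⟩
  · rintro ⟨i, m⟩ ⟨h1, h2, h3⟩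
    exact ⟨by simpa [Equiv.Perm.apply_inv_self] using h2, h1, h3⟩
  · rintro ⟨i, m⟩ _
    simp [Equiv.Perm.inv_apply_self]
  · rintro ⟨i, m⟩ _
    simp [Equiv.Perm.apply_inv_self]

private lemma cover_split :
    fcard (fun p : Fin n × Fin n => p.1 < p.2 ∧ P p.1)
      = fcard (fun p : Fin n × Fin n => σ p.2 < p.1 ∧ p.1 < p.2 ∧ P p.1)
        + (fcard (fun p : Fin n × Fin n => σ p.2 = p.1 ∧ p.1 < p.2 ∧ P p.1)
          + fcard (fun p : Fin n × Fin n => p.1 < σ p.2 ∧ p.1 < p.2 ∧ P p.1)) := by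
  apply card_split3
  · intro a
    by_cases hP : P a.1
    · simp only [hP, and_true]
      simp only [Fin.lt_def, Fin.ext_iff]
      omega
    · simp [hP]
  · intro a hq hr
    have h1 := hq.1; have h2 := hr.1
    simp only [Fin.lt_def, Fin.ext_iff] at h1 h2
    omega
  · intro a hq hr
    have h1 := hq.1; have h2 := hr.1
    simp only [Fin.lt_def, Fin.ext_iff] at h1 h2
    omega
  · intro a hq hr
    have h1 := hq.1; have h2 := hr.1
    simp only [Fin.lt_def, Fin.ext_iff] at h1 h2
    omega

private lemma cover_swap :
    fcard (fun p : Fin n × Fin n => σ p.2 < p.1 ∧ p.1 < p.2 ∧ P p.1)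
      + fcard (fun i : Fin n => i < σ⁻¹ i ∧ P i)
    = fcard (fun p : Fin n × Fin n => σ⁻¹ p.2 < p.1 ∧ p.1 < p.2 ∧ P p.1)
      + fcard (fun i : Fin n => i < σ i ∧ P i) := by
  have c1 := cover_split σ P
  have c2 := cover_split σ⁻¹ P
  have m1 := mid_eq σ P
  have m2 := mid_eq σ⁻¹ P
  rw [inv_inv] at m2
  have r := rest_eq σ P
  omega

/-- split an X-type set along a partition of the status predicate -/
private lemma aX_split3 (Q R S : Fin n → Prop)
    (h : ∀ x, P x ↔ Q x ∨ R x ∨ S x) (hQR : ∀ x, Q x → R x → False)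
    (hQS : ∀ x, Q x → S x → False) (hRS : ∀ x, R x → S x → False) :
    fcard (fun p : Fin n × Fin n => p.1 < p.2 ∧ p.2 < σ p.1 ∧ P p.2)
      = fcard (fun p : Fin n × Fin n => p.1 < p.2 ∧ p.2 < σ p.1 ∧ Q p.2)
        + (fcard (fun p : Fin n × Fin n => p.1 < p.2 ∧ p.2 < σ p.1 ∧ R p.2)
          + fcard (fun p : Fin n × Fin n => p.1 < p.2 ∧ p.2 < σ p.1 ∧ S p.2)) := by
  apply card_split3
  · intro a
    have := h a.2
    tauto
  · exact fun a hq hr => hQR a.2 hq.2.2 hr.2.2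
  · exact fun a hq hr => hQS a.2 hq.2.2 hr.2.2
  · exact fun a hq hr => hRS a.2 hq.2.2 hr.2.2

private lemma aX_split2 (Q R : Fin n → Prop)
    (h : ∀ x, P x ↔ Q x ∨ R x) (hQR : ∀ x, Q x → R x → False) :
    fcard (fun p : Fin n × Fin n => p.1 < p.2 ∧ p.2 < σ p.1 ∧ P p.2)
      = fcard (fun p : Fin n × Fin n => p.1 < p.2 ∧ p.2 < σ p.1 ∧ Q p.2)
        + fcard (fun p : Fin n × Fin n => p.1 < p.2 ∧ p.2 < σ p.1 ∧ R p.2) := by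
  apply card_split
  · intro a
    have := h a.2
    tauto
  · exact fun a hq hr => hQR a.2 hq.2.2 hr.2.2

private lemma aY_split3 (Q R S : Fin n → Prop)
    (h : ∀ x, P x ↔ Q x ∨ R x ∨ S x) (hQR : ∀ x, Q x → R x → False)
    (hQS : ∀ x, Q x → S x → False) (hRS : ∀ x, R x → S x → False) :
    fcard (fun p : Fin n × Fin n => σ p.2 < p.1 ∧ p.1 < p.2 ∧ P p.1)
      = fcard (fun p : Fin n × Fin n => σ p.2 < p.1 ∧ p.1 < p.2 ∧ Q p.1)
        + (fcard (fun p : Fin n × Fin n => σ p.2 < p.1 ∧ p.1 < p.2 ∧ R p.1)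
          + fcard (fun p : Fin n × Fin n => σ p.2 < p.1 ∧ p.1 < p.2 ∧ S p.1)) := by
  apply card_split3
  · intro a
    have := h a.1
    tauto
  · exact fun a hq hr => hQR a.1 hq.2.2 hr.2.2
  · exact fun a hq hr => hQS a.1 hq.2.2 hr.2.2
  · exact fun a hq hr => hRS a.1 hq.2.2 hr.2.2

private lemma aY_split2 (Q R : Fin n → Prop)
    (h : ∀ x, P x ↔ Q x ∨ R x) (hQR : ∀ x, Q x → R x → False) :
    fcard (fun p : Fin n × Fin n => σ p.2 < p.1 ∧ p.1 < p.2 ∧ P p.1)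
      = fcard (fun p : Fin n × Fin n => σ p.2 < p.1 ∧ p.1 < p.2 ∧ Q p.1)
        + fcard (fun p : Fin n × Fin n => σ p.2 < p.1 ∧ p.1 < p.2 ∧ R p.1) := by
  apply card_split
  · intro a
    have := h a.1
    tauto
  · exact fun a hq hr => hQR a.1 hq.2.2 hr.2.2

end Cover

theorem inv_decomposition (n : ℕ) (σ : Equiv.Perm (Fin n)) :
    inv' σ = 2 * nes σ + crs σ + exc σ := by
  -- express the given quantities through `fcard`
  have e1 : inv' σ = fcard (fun p : Fin n × Fin n => p.1 < p.2 ∧ σ p.2 < σ p.1) := by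
    unfold inv'
    exact fcard_eq _
  have e2 : nes σ = fcard (fun p : Fin n × Fin n => isNesting σ p.1 p.2) := by
    unfold nes
    exact fcard_eq _
  have e3 : crs σ = fcard (fun p : Fin n × Fin n => isCrossing σ p.1 p.2) := by
    unfold crs
    exact fcard_eq _
  have e4 : exc σ = fcard (fun i : Fin n => i < σ i) := by
    unfold exc
    exact fcard_eq _
  have e5 : ut σ = fcard (fun i : Fin n => σ⁻¹ i < i ∧ i < σ i) := by
    unfold ut
    exact fcard_eq _
  have e6 : lt' σ = fcard (fun i : Fin n => σ i < i ∧ i < σ⁻¹ i) := by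
    unfold lt'
    exact fcard_eq _
  -- status split facts
  have hs1 : ∀ x : Fin n, x < σ x ↔ (x < σ x ∧ x < σ⁻¹ x) ∨ (σ⁻¹ x < x ∧ x < σ x) := by
    intro x
    have h := invfix_val σ x
    simp only [Fin.lt_def]
    omega
  have hs2 : ∀ x : Fin n, x ≤ σ⁻¹ x ↔
      (x < σ x ∧ x < σ⁻¹ x) ∨ ((σ x < x ∧ x < σ⁻¹ x) ∨ σ x = x) := by
    intro x
    have h := invfix_val σ x
    simp only [Fin.lt_def, Fin.le_def, Fin.ext_iff]
    omega
  have hs3 : ∀ x : Fin n, σ⁻¹ x < x ↔ (σ⁻¹ x < x ∧ x < σ x) ∨ (σ x < x ∧ σ⁻¹ x < x) := by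
    intro x
    have h := invfix_val σ x
    simp only [Fin.lt_def]
    omega
  have hs4 : ∀ x : Fin n, σ x ≤ x ↔
      (σ x < x ∧ x < σ⁻¹ x) ∨ ((σ x < x ∧ σ⁻¹ x < x) ∨ σ x = x) := by
    intro x
    have h := invfix_val σ x
    simp only [Fin.lt_def, Fin.le_def, Fin.ext_iff]
    omega
  -- step 1 : inversions = nestings + mixed pairs E
  have h1 : fcard (fun p : Fin n × Fin n => p.1 < p.2 ∧ σ p.2 < σ p.1)
      = fcard (fun p : Fin n × Fin n => isNesting σ p.1 p.2)
        + fcard (fun p : Fin n × Fin n =>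
            p.1 < p.2 ∧ σ p.2 < σ p.1 ∧ p.1 < σ p.1 ∧ σ p.2 ≤ p.2) := by
    apply card_split
    · intro p
      simp only [isNesting, Fin.lt_def, Fin.le_def]
      omega
    · intro p hq hr
      simp only [isNesting, Fin.lt_def, Fin.le_def] at hq hr
      omega
  -- step 2 : reparametrize E through σ
  have h2 : fcard (fun p : Fin n × Fin n =>
        p.1 < p.2 ∧ σ p.2 < σ p.1 ∧ p.1 < σ p.1 ∧ σ p.2 ≤ p.2)
      = fcard (fun p : Fin n × Fin n =>
        p.1 < σ p.1 ∧ p.2 ≤ σ⁻¹ p.2 ∧ p.1 < σ⁻¹ p.2 ∧ p.2 < σ p.1) := by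
    apply card_bij_pred (fun p : Fin n × Fin n => (p.1, σ p.2))
      (fun p : Fin n × Fin n => (p.1, σ⁻¹ p.2))
    · rintro ⟨i, j⟩ ⟨g1, g2, g3, g4⟩
      dsimp only at *
      exact ⟨g3, by simpa [Equiv.Perm.inv_apply_self] using g4,
        by simpa [Equiv.Perm.inv_apply_self] using g1, g2⟩
    · rintro ⟨i, k⟩ ⟨g1, g2, g3, g4⟩
      dsimp only at *
      exact ⟨g3, by simpa [Equiv.Perm.apply_inv_self] using g4, g1,
        by simpa [Equiv.Perm.apply_inv_self] using g2⟩
    · rintro ⟨i, j⟩ _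
      simp [Equiv.Perm.inv_apply_self]
    · rintro ⟨i, k⟩ _
      simp [Equiv.Perm.apply_inv_self]
  -- step 3 : split E' by position of p.2 relative to p.1
  have h3 : fcard (fun p : Fin n × Fin n =>
        p.1 < σ p.1 ∧ p.2 ≤ σ⁻¹ p.2 ∧ p.1 < σ⁻¹ p.2 ∧ p.2 < σ p.1)
      = fcard (fun p : Fin n × Fin n => p.1 < p.2 ∧ p.2 < σ p.1 ∧ p.2 ≤ σ⁻¹ p.2)
        + (fcard (fun p : Fin n × Fin n => p.2 = p.1 ∧ p.1 < σ p.1 ∧ p.1 < σ⁻¹ p.1)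
          + fcard (fun p : Fin n × Fin n => p.2 < p.1 ∧ p.1 < σ⁻¹ p.2 ∧ p.1 < σ p.1)) := by
    apply card_split3
    · rintro ⟨i, k⟩
      rcases lt_trichotomy i k with hik | hik | hik
      · dsimp only
        simp only [Fin.lt_def, Fin.le_def, Fin.ext_iff] at hik ⊢
        omega
      · subst hik
        dsimp only
        simp only [Fin.lt_def, Fin.le_def, Fin.ext_iff, lt_self_iff_false,
          false_and, true_and, false_or, or_false]
        omega
      · dsimp only
        simp only [Fin.lt_def, Fin.le_def, Fin.ext_iff] at hik ⊢
        omega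
    · intro p hq hr
      have q1 := hq.1
      have r1 := hr.1
      simp only [Fin.lt_def, Fin.ext_iff] at q1 r1
      omega
    · intro p hq hr
      have q1 := hq.1
      have r1 := hr.1
      simp only [Fin.lt_def, Fin.ext_iff] at q1 r1
      omega
    · intro p hq hr
      have q1 := hq.1
      have r1 := hr.1
      simp only [Fin.lt_def, Fin.ext_iff] at q1 r1
      omega
  -- diagonal part is counted by points
  have h4 : fcard (fun p : Fin n × Fin n => p.2 = p.1 ∧ p.1 < σ p.1 ∧ p.1 < σ⁻¹ p.1)
      = fcard (fun i : Fin n => i < σ i ∧ i < σ⁻¹ i) := by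
    apply card_bij_pred (fun p : Fin n × Fin n => p.1) (fun i : Fin n => (i, i))
    · rintro ⟨i, k⟩ ⟨g1, g2, g3⟩
      dsimp only at *
      exact ⟨g2, g3⟩
    · intro i hi
      exact ⟨rfl, hi.1, hi.2⟩
    · rintro ⟨i, k⟩ ⟨g1, g2, g3⟩
      dsimp only at *
      subst g1
      rfl
    · intro i _
      rfl
  -- excedances split
  have h5 : fcard (fun i : Fin n => i < σ i)
      = fcard (fun i : Fin n => i < σ i ∧ i < σ⁻¹ i)
        + fcard (fun i : Fin n => σ⁻¹ i < i ∧ i < σ i) := by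
    apply card_split hs1
    intro x hq hr
    simp only [Fin.lt_def] at hq hr
    omega
  -- C3 reparametrized through σ
  have h6 : fcard (fun p : Fin n × Fin n => p.2 < p.1 ∧ p.1 < σ⁻¹ p.2 ∧ p.1 < σ p.1)
      = fcard (fun p : Fin n × Fin n => σ p.2 < p.1 ∧ p.1 < p.2 ∧ p.1 < σ p.1) := by
    apply card_bij_pred (fun p : Fin n × Fin n => (p.1, σ⁻¹ p.2))
      (fun p : Fin n × Fin n => (p.1, σ p.2))
    · rintro ⟨i, k⟩ ⟨g1, g2, g3⟩
      dsimp only at *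
      exact ⟨by simpa [Equiv.Perm.apply_inv_self] using g1, g2, g3⟩
    · rintro ⟨i, m⟩ ⟨g1, g2, g3⟩
      dsimp only at *
      exact ⟨g1, by simpa [Equiv.Perm.inv_apply_self] using g2, g3⟩
    · rintro ⟨i, k⟩ _
      simp [Equiv.Perm.apply_inv_self]
    · rintro ⟨i, m⟩ _
      simp [Equiv.Perm.inv_apply_self]
  -- C2 split by status of middle point
  have h7 : fcard (fun p : Fin n × Fin n => p.1 < p.2 ∧ p.2 < σ p.1 ∧ p.2 ≤ σ⁻¹ p.2)
      = fcard (fun p : Fin n × Fin n =>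
          p.1 < p.2 ∧ p.2 < σ p.1 ∧ (p.2 < σ p.2 ∧ p.2 < σ⁻¹ p.2))
        + (fcard (fun p : Fin n × Fin n =>
            p.1 < p.2 ∧ p.2 < σ p.1 ∧ (σ p.2 < p.2 ∧ p.2 < σ⁻¹ p.2))
          + fcard (fun p : Fin n × Fin n =>
              p.1 < p.2 ∧ p.2 < σ p.1 ∧ σ p.2 = p.2)) := by
    apply aX_split3 σ _ _ _ _ hs2
    · intro x q r
      simp only [Fin.lt_def] at q r
      omega
    · intro x q r
      simp only [Fin.lt_def, Fin.ext_iff] at q r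
      omega
    · intro x q r
      simp only [Fin.lt_def, Fin.ext_iff] at q r
      omega
  -- B1 split by status
  have h8 : fcard (fun p : Fin n × Fin n => p.1 < p.2 ∧ p.2 < σ p.1 ∧ p.2 < σ p.2)
      = fcard (fun p : Fin n × Fin n =>
          p.1 < p.2 ∧ p.2 < σ p.1 ∧ (p.2 < σ p.2 ∧ p.2 < σ⁻¹ p.2))
        + fcard (fun p : Fin n × Fin n =>
            p.1 < p.2 ∧ p.2 < σ p.1 ∧ (σ⁻¹ p.2 < p.2 ∧ p.2 < σ p.2)) := by
    apply aX_split2 σ _ _ _ hs1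
    intro x q r
    simp only [Fin.lt_def] at q r
    omega
  -- W split by status
  have h9 : fcard (fun p : Fin n × Fin n => p.1 < p.2 ∧ p.2 < σ p.1 ∧ σ⁻¹ p.2 < p.2)
      = fcard (fun p : Fin n × Fin n =>
          p.1 < p.2 ∧ p.2 < σ p.1 ∧ (σ⁻¹ p.2 < p.2 ∧ p.2 < σ p.2))
        + fcard (fun p : Fin n × Fin n =>
            p.1 < p.2 ∧ p.2 < σ p.1 ∧ (σ p.2 < p.2 ∧ σ⁻¹ p.2 < p.2)) := by
    apply aX_split2 σ _ _ _ hs3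
    intro x q r
    simp only [Fin.lt_def, Fin.ext_iff] at q r
    omega
  -- C3' split by status
  have h10 : fcard (fun p : Fin n × Fin n => σ p.2 < p.1 ∧ p.1 < p.2 ∧ p.1 < σ p.1)
      = fcard (fun p : Fin n × Fin n =>
          σ p.2 < p.1 ∧ p.1 < p.2 ∧ (p.1 < σ p.1 ∧ p.1 < σ⁻¹ p.1))
        + fcard (fun p : Fin n × Fin n =>
            σ p.2 < p.1 ∧ p.1 < p.2 ∧ (σ⁻¹ p.1 < p.1 ∧ p.1 < σ p.1)) := by
    apply aY_split2 σ _ _ _ hs1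
    intro x q r
    simp only [Fin.lt_def] at q r
    omega
  -- Yd split by status
  have h11 : fcard (fun p : Fin n × Fin n => σ p.2 < p.1 ∧ p.1 < p.2 ∧ σ p.1 ≤ p.1)
      = fcard (fun p : Fin n × Fin n =>
          σ p.2 < p.1 ∧ p.1 < p.2 ∧ (σ p.1 < p.1 ∧ p.1 < σ⁻¹ p.1))
        + (fcard (fun p : Fin n × Fin n =>
            σ p.2 < p.1 ∧ p.1 < p.2 ∧ (σ p.1 < p.1 ∧ σ⁻¹ p.1 < p.1))
          + fcard (fun p : Fin n × Fin n =>
              σ p.2 < p.1 ∧ p.1 < p.2 ∧ σ p.1 = p.1)) := by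
    apply aY_split3 σ _ _ _ _ hs4
    · intro x q r
      simp only [Fin.lt_def] at q r
      omega
    · intro x q r
      simp only [Fin.lt_def, Fin.ext_iff] at q r
      omega
    · intro x q r
      simp only [Fin.lt_def, Fin.ext_iff] at q r
      omega
  -- crossings split into the two kinds
  have h12 : fcard (fun p : Fin n × Fin n => isCrossing σ p.1 p.2)
      = fcard (fun p : Fin n × Fin n => p.1 < p.2 ∧ p.2 < σ p.1 ∧ σ p.1 < σ p.2)
        + fcard (fun p : Fin n × Fin n => σ p.1 < σ p.2 ∧ σ p.2 ≤ p.1 ∧ p.1 < p.2) := by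
    apply card_split
    · intro p
      simp only [isCrossing]
    · intro p hq hr
      simp only [Fin.lt_def, Fin.le_def] at hq hr
      omega
  -- nestings split into the two kinds
  have h13 : fcard (fun p : Fin n × Fin n => isNesting σ p.1 p.2)
      = fcard (fun p : Fin n × Fin n => p.1 < p.2 ∧ p.2 < σ p.2 ∧ σ p.2 < σ p.1)
        + fcard (fun p : Fin n × Fin n => σ p.2 < σ p.1 ∧ σ p.1 ≤ p.1 ∧ p.1 < p.2) := by
    apply card_split
    · intro p
      simp only [isNesting]
    · intro p hq hr
      simp only [Fin.lt_def, Fin.le_def] at hq hr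
      omega
  -- B1 = crossings of type 1 + nestings of type 1
  have h14 : fcard (fun p : Fin n × Fin n => p.1 < p.2 ∧ p.2 < σ p.1 ∧ p.2 < σ p.2)
      = fcard (fun p : Fin n × Fin n => p.1 < p.2 ∧ p.2 < σ p.1 ∧ σ p.1 < σ p.2)
        + fcard (fun p : Fin n × Fin n => p.1 < p.2 ∧ p.2 < σ p.2 ∧ σ p.2 < σ p.1) := by
    apply card_split
    · intro p
      have h := inj_val σ p.1 p.2
      simp only [Fin.lt_def]
      omega
    · intro p hq hr
      simp only [Fin.lt_def] at hq hr
      omega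
  -- B2 = crossings of type 2 + nestings of type 2
  have h15 : fcard (fun p : Fin n × Fin n => p.1 < p.2 ∧ σ p.2 ≤ p.1 ∧ σ p.1 ≤ p.1)
      = fcard (fun p : Fin n × Fin n => σ p.1 < σ p.2 ∧ σ p.2 ≤ p.1 ∧ p.1 < p.2)
        + fcard (fun p : Fin n × Fin n => σ p.2 < σ p.1 ∧ σ p.1 ≤ p.1 ∧ p.1 < p.2) := by
    apply card_split
    · intro p
      have h := inj_val σ p.1 p.2
      simp only [Fin.lt_def, Fin.le_def]
      omega
    · intro p hq hr
      simp only [Fin.lt_def, Fin.le_def] at hq hr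
      omega
  -- B2 split into the value-fixed part and the Yd part
  have h16 : fcard (fun p : Fin n × Fin n => p.1 < p.2 ∧ σ p.2 ≤ p.1 ∧ σ p.1 ≤ p.1)
      = fcard (fun p : Fin n × Fin n => σ p.2 = p.1 ∧ p.1 < p.2 ∧ σ p.1 ≤ p.1)
        + fcard (fun p : Fin n × Fin n => σ p.2 < p.1 ∧ p.1 < p.2 ∧ σ p.1 ≤ p.1) := by
    apply card_split
    · intro p
      simp only [Fin.lt_def, Fin.le_def, Fin.ext_iff]
      omega
    · intro p hq hr
      have q1 := hq.1
      have r1 := hr.1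
      simp only [Fin.lt_def, Fin.ext_iff] at q1 r1
      omega
  have h17 : fcard (fun p : Fin n × Fin n => σ p.2 = p.1 ∧ p.1 < p.2 ∧ σ p.1 ≤ p.1)
      = fcard (fun i : Fin n => i < σ⁻¹ i ∧ σ i ≤ i) :=
    mid_eq σ (fun x => σ x ≤ x)
  have h18 : fcard (fun i : Fin n => i < σ⁻¹ i ∧ σ i ≤ i)
      = fcard (fun i : Fin n => σ i < i ∧ i < σ⁻¹ i) := by
    apply card_iff
    intro i
    have h := invfix_val σ i
    simp only [Fin.lt_def, Fin.le_def]
    omega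
  -- X-sets equal Z'-sets
  have h19a := aX_eq_aZ σ (fun x => x < σ x ∧ x < σ⁻¹ x)
  have h19b := aX_eq_aZ σ (fun x => σ⁻¹ x < x ∧ x < σ x)
  have h19c := aX_eq_aZ σ (fun x => σ x < x ∧ x < σ⁻¹ x)
  have h19d := aX_eq_aZ σ (fun x => σ x < x ∧ σ⁻¹ x < x)
  have h19e := aX_eq_aZ σ (fun x => σ x = x)
  -- cover swaps
  have h20a := cover_swap σ (fun x => x < σ x ∧ x < σ⁻¹ x)
  have h20b := cover_swap σ (fun x => σ⁻¹ x < x ∧ x < σ x)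
  have h20c := cover_swap σ (fun x => σ x < x ∧ x < σ⁻¹ x)
  have h20d := cover_swap σ (fun x => σ x < x ∧ σ⁻¹ x < x)
  have h20e := cover_swap σ (fun x => σ x = x)
  -- point-count simplifications
  have c1 : fcard (fun i : Fin n => i < σ⁻¹ i ∧ (i < σ i ∧ i < σ⁻¹ i))
      = fcard (fun i : Fin n => i < σ i ∧ i < σ⁻¹ i) := by
    apply card_iff
    intro i
    tauto
  have c2 : fcard (fun i : Fin n => i < σ i ∧ (i < σ i ∧ i < σ⁻¹ i))
      = fcard (fun i : Fin n => i < σ i ∧ i < σ⁻¹ i) := by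
    apply card_iff
    intro i
    tauto
  have c3 : fcard (fun i : Fin n => i < σ⁻¹ i ∧ (σ⁻¹ i < i ∧ i < σ i)) = 0 := by
    apply _root_.card_zero
    intro i hi
    simp only [Fin.lt_def] at hi
    omega
  have c4 : fcard (fun i : Fin n => i < σ i ∧ (σ⁻¹ i < i ∧ i < σ i))
      = fcard (fun i : Fin n => σ⁻¹ i < i ∧ i < σ i) := by
    apply card_iff
    intro i
    tauto
  have c5 : fcard (fun i : Fin n => i < σ⁻¹ i ∧ (σ i < i ∧ i < σ⁻¹ i))
      = fcard (fun i : Fin n => σ i < i ∧ i < σ⁻¹ i) := by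
    apply card_iff
    intro i
    tauto
  have c6 : fcard (fun i : Fin n => i < σ i ∧ (σ i < i ∧ i < σ⁻¹ i)) = 0 := by
    apply _root_.card_zero
    intro i hi
    simp only [Fin.lt_def] at hi
    omega
  have c7 : fcard (fun i : Fin n => i < σ⁻¹ i ∧ (σ i < i ∧ σ⁻¹ i < i)) = 0 := by
    apply _root_.card_zero
    intro i hi
    simp only [Fin.lt_def] at hi
    omega
  have c8 : fcard (fun i : Fin n => i < σ i ∧ (σ i < i ∧ σ⁻¹ i < i)) = 0 := by
    apply _root_.card_zero
    intro i hi
    simp only [Fin.lt_def] at hi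
    omega
  have c9 : fcard (fun i : Fin n => i < σ⁻¹ i ∧ σ i = i) = 0 := by
    apply _root_.card_zero
    intro i hi
    obtain ⟨a, b⟩ := hi
    have h := invfix_val σ i
    simp only [Fin.lt_def] at a
    simp only [Fin.ext_iff] at b
    omega
  have c10 : fcard (fun i : Fin n => i < σ i ∧ σ i = i) = 0 := by
    apply _root_.card_zero
    intro i hi
    obtain ⟨a, b⟩ := hi
    simp only [Fin.lt_def] at a
    simp only [Fin.ext_iff] at b
    omega
  -- the three-step bijection chain giving Xa = Xd
  have h22 : fcard (fun p : Fin n × Fin n => p.1 < p.2 ∧ p.2 < σ p.1 ∧ p.2 < σ p.2)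
      = fcard (fun p : Fin n × Fin n =>
          p.1 < σ p.1 ∧ p.2 < σ p.2 ∧ p.2 < p.1 ∧ p.1 < σ p.2) := by
    apply card_bij_pred (fun p : Fin n × Fin n => (p.2, p.1))
      (fun p : Fin n × Fin n => (p.2, p.1))
    · rintro ⟨i, k⟩ ⟨g1, g2, g3⟩
      dsimp only at *
      exact ⟨g3, lt_trans g1 g2, g1, g2⟩
    · rintro ⟨x, y⟩ ⟨g1, g2, g3, g4⟩
      dsimp only at *
      exact ⟨g3, g4, g1⟩
    · rintro ⟨i, k⟩ _
      rfl
    · rintro ⟨x, y⟩ _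
      rfl
  have h23 : fcard (fun p : Fin n × Fin n => p.1 < p.2 ∧ p.2 < σ p.1 ∧ σ⁻¹ p.2 < p.2)
      = fcard (fun p : Fin n × Fin n =>
          p.1 < σ p.1 ∧ p.2 < σ p.2 ∧ p.2 < σ p.1 ∧ σ p.1 < σ p.2) := by
    apply card_bij_pred (fun p : Fin n × Fin n => (σ⁻¹ p.2, p.1))
      (fun p : Fin n × Fin n => (p.2, σ p.1))
    · rintro ⟨i, k⟩ ⟨g1, g2, g3⟩
      dsimp only at *
      refine ⟨?_, lt_trans g1 g2, ?_, ?_⟩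
      · simpa [Equiv.Perm.apply_inv_self] using g3
      · simpa [Equiv.Perm.apply_inv_self] using g1
      · simpa [Equiv.Perm.apply_inv_self] using g2
    · rintro ⟨a, b⟩ ⟨g1, g2, g3, g4⟩
      dsimp only at *
      refine ⟨g3, g4, ?_⟩
      simpa [Equiv.Perm.inv_apply_self] using g1
    · rintro ⟨i, k⟩ _
      simp [Equiv.Perm.apply_inv_self]
    · rintro ⟨a, b⟩ _
      simp [Equiv.Perm.inv_apply_self]
  have h24 : fcard (fun p : Fin n × Fin n =>
        p.1 < σ p.1 ∧ p.2 < σ p.2 ∧ p.2 < σ p.1 ∧ σ p.1 < σ p.2)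
      = fcard (fun p : Fin n × Fin n =>
          p.1 < σ p.1 ∧ p.2 < σ p.2 ∧ p.2 < p.1 ∧ p.1 < σ p.2) := by
    apply card_bij_pred
      (fun q : Fin n × Fin n => if q.1 < q.2 then (q.2, q.1) else q)
      (fun q : Fin n × Fin n => if σ q.1 < σ q.2 then q else (q.2, q.1))
    · rintro ⟨a, b⟩ ⟨g1, g2, g3, g4⟩
      dsimp only at *
      by_cases hab : a < b
      · rw [if_pos hab]
        exact ⟨g2, g1, hab, g3⟩
      · rw [if_neg hab]
        have hba : b < a := by
          rcases lt_or_eq_of_le (not_lt.mp hab) with h | h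
          · exact h
          · subst h
            exact absurd g4 (lt_irrefl _)
        exact ⟨g1, g2, hba, lt_trans g1 g4⟩
    · rintro ⟨x, y⟩ ⟨g1, g2, g3, g4⟩
      dsimp only at *
      by_cases hxy : σ x < σ y
      · rw [if_pos hxy]
        exact ⟨g1, g2, lt_trans g3 g1, hxy⟩
      · rw [if_neg hxy]
        have hyx : σ y < σ x := by
          rcases lt_or_eq_of_le (not_lt.mp hxy) with h | h
          · exact h
          · exact absurd g3 (by rw [σ.injective h]; exact lt_irrefl _)
        exact ⟨g2, g1, g4, hyx⟩
    · rintro ⟨a, b⟩ ⟨g1, g2, g3, g4⟩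
      dsimp only at *
      by_cases hab : a < b
      · rw [if_pos hab]
        dsimp only
        rw [if_neg (lt_asymm g4)]
      · rw [if_neg hab]
        dsimp only
        rw [if_pos g4]
    · rintro ⟨x, y⟩ ⟨g1, g2, g3, g4⟩
      dsimp only at *
      by_cases hxy : σ x < σ y
      · rw [if_pos hxy]
        dsimp only
        rw [if_neg (lt_asymm g3)]
      · rw [if_neg hxy]
        dsimp only
        rw [if_pos g3]
  omega
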